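/- Fix p ∈ (0,1) and natural numbers m, n, k, Δ with n ≥ k+1 and m ≥ Δ. Let A be a random m×n binary matrix whose mn entries are mutually independent, each equal to 1 with probability p. Then the probability that A is not (k,Δ)-deletion disjunct is at most (1 − p(1−p)^k)^{m−Δ} · C(m,Δ)² · C(n,k) · (n−k), where C(·,·) denotes the binomial coefficient. -/

import Mathlib

/-- `u` is a subsequence of `v` (obtained by deleting coordinates, keeping order). -/
def IsSubseq {α : Type*} {a b : ℕ} (u : Fin a → α) (v : Fin b → α) : Prop :=
  ∃ f : Fin a → Fin b, StrictMono f ∧ ∀ i, u i = v (f i)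

/-- Coordinate-wise OR of the columns of `A` indexed by `S`. -/
noncomputable def orSum {m n : ℕ} (A : Fin m → Fin n → Bool) (S : Finset (Fin n)) :
    Fin m → Bool :=
  fun r => S.sup fun i => A r i

/-- `A` is `k`-separable: OR-sums of any two distinct subsets of at most `k` columns differ. -/
def Separable {m n : ℕ} (k : ℕ) (A : Fin m → Fin n → Bool) : Prop :=
  ∀ S₁ S₂ : Finset (Fin n), S₁.card ≤ k → S₂.card ≤ k → S₁ ≠ S₂ →
    orSum A S₁ ≠ orSum A S₂

/-- `A` is `(k, Δ)`-deletion separable: OR-sums of any two distinct subsets of at most `k`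
columns have no common subsequence of length `m - Δ`. -/
def DelSeparable {m n : ℕ} (k Δ : ℕ) (A : Fin m → Fin n → Bool) : Prop :=
  ∀ S₁ S₂ : Finset (Fin n), S₁.card ≤ k → S₂.card ≤ k → S₁ ≠ S₂ →
    ¬ ∃ w : Fin (m - Δ) → Bool, IsSubseq w (orSum A S₁) ∧ IsSubseq w (orSum A S₂)

/-- `A` is `(k, Δ)`-deletion disjunct: for any `k+1` distinct columns `i 0, i 1, …, i k`,
every length-`(m-Δ)` subsequence `u` of column `i 0` and every length-`(m-Δ)` subsequence `v`
of the OR of columns `i 1, …, i k` have a position `ℓ` with `u ℓ = 1` and `v ℓ = 0`. -/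
def DelDisjunct {m n : ℕ} (k Δ : ℕ) (A : Fin m → Fin n → Bool) : Prop :=
  ∀ i : Fin (k + 1) → Fin n, Function.Injective i →
    ∀ u v : Fin (m - Δ) → Bool,
      IsSubseq u (fun r => A r (i 0)) →
      IsSubseq v (fun r => Finset.univ.sup fun s : Fin k => A r (i s.succ)) →
      ∃ ℓ, u ℓ = true ∧ v ℓ = false

open MeasureTheory

open scoped ENNReal

section Aux
variable {β : Type*} [MeasurableSpace β] (ν : Measure β) [IsProbabilityMeasure ν]

lemma measurePreserving_comp_inj {ι κ : Type*} [Fintype ι] [Fintype κ]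
    {φ : κ → ι} (hφ : Function.Injective φ) :
    MeasurePreserving (fun f : ι → β => f ∘ φ)
      (Measure.pi fun _ : ι => ν) (Measure.pi fun _ : κ => ν) := by
  classical
  let e : (κ ⊕ {i : ι // ¬ i ∈ Set.range φ}) ≃ ι :=
    (Equiv.sumCongr (Equiv.ofInjective φ hφ) (Equiv.refl _)).trans
      (Equiv.sumCompl (fun i => i ∈ Set.range φ))
  have h1 : MeasurePreserving (MeasurableEquiv.piCongrLeft (fun _ : ι => β) e)
      (Measure.pi fun _ => ν) (Measure.pi fun _ => ν) :=
    measurePreserving_piCongrLeft (fun _ : ι => ν) e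
  have h2 := measurePreserving_sumPiEquivProdPi
    (fun _ : κ ⊕ {i : ι // ¬ i ∈ Set.range φ} => ν) (X := fun _ => β)
  have h3 : MeasurePreserving (Prod.fst :
        ((κ → β) × ({i : ι // ¬ i ∈ Set.range φ} → β)) → (κ → β))
      ((Measure.pi fun _ => ν).prod (Measure.pi fun _ => ν)) (Measure.pi fun _ => ν) :=
    ⟨measurable_fst, by rw [Measure.map_fst_prod]; simp⟩
  have key := h3.comp (h2.comp h1.symm)
  have hfun : (fun f : ι → β => f ∘ φ) =
      (Prod.fst ∘ (⇑(MeasurableEquiv.sumPiEquivProdPi (fun _ : κ ⊕ _ => β)) ∘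
        ⇑(MeasurableEquiv.piCongrLeft (fun _ : ι => β) e).symm)) := by
    funext f
    funext j
    simp [e, MeasurableEquiv.sumPiEquivProdPi, MeasurableEquiv.piCongrLeft,
      Equiv.sumPiEquivProdPi, Equiv.piCongrLeft, Equiv.piCongrLeft',
      Function.comp, Equiv.sumCompl, Equiv.ofInjective]
  rw [hfun]
  exact key

lemma measurePreserving_uncurry_pi {a κ : Type*} [Fintype a] [Fintype κ] :
    MeasurePreserving (fun (h : a → κ → β) (q : a × κ) => h q.1 q.2)
      (Measure.pi fun _ : a => (Measure.pi fun _ : κ => ν))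
      (Measure.pi fun _ : a × κ => ν) := by
  have hmeas : Measurable (fun (h : a → κ → β) (q : a × κ) => h q.1 q.2) :=
    measurable_pi_iff.2 fun q => (measurable_pi_apply q.2).comp (measurable_pi_apply q.1)
  refine ⟨hmeas, (Measure.pi_eq fun s hs => ?_).symm⟩
  rw [Measure.map_apply hmeas (MeasurableSet.univ_pi hs)]
  have : (fun (h : a → κ → β) (q : a × κ) => h q.1 q.2) ⁻¹' Set.pi Set.univ s
      = Set.pi Set.univ (fun ℓ => Set.pi Set.univ fun j => s (ℓ, j)) := by
    ext h
    simp [Set.mem_pi, Prod.forall]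
  rw [this, Measure.pi_pi]
  simp_rw [Measure.pi_pi]
  exact (Fintype.prod_prod_type (f := fun q => ν (s q))).symm

lemma measure_blockEvent {ι : Type*} [Fintype ι] {t c : ℕ}
    {φ : Fin t × Fin c → ι} (hφ : Function.Injective φ)
    {D₀ : Set (Fin c → β)} (hD₀ : MeasurableSet D₀) :
    Measure.pi (fun _ : ι => ν) {f : ι → β | ∀ ℓ : Fin t, (fun j => f (φ (ℓ, j))) ∈ D₀}
      = (Measure.pi (fun _ : Fin c => ν) D₀) ^ t := by
  classical
  set D : Set (Fin t × Fin c → β) := {g | ∀ ℓ, (fun j => g (ℓ, j)) ∈ D₀} with hDdef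
  have hD : MeasurableSet D := by
    have : D = ⋂ ℓ, (fun (g : Fin t × Fin c → β) (j : Fin c) => g (ℓ, j)) ⁻¹' D₀ := by
      ext g; simp [hDdef]
    rw [this]
    exact MeasurableSet.iInter fun ℓ =>
      hD₀.preimage (measurable_pi_iff.2 fun j => measurable_pi_apply _)
  have hset : {f : ι → β | ∀ ℓ : Fin t, (fun j => f (φ (ℓ, j))) ∈ D₀}
      = (fun f : ι → β => f ∘ φ) ⁻¹' D := rfl
  rw [hset, (measurePreserving_comp_inj ν hφ).measure_preimage hD.nullMeasurableSet]
  rw [← (measurePreserving_uncurry_pi ν (a := Fin t) (κ := Fin c)).measure_preimage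
    hD.nullMeasurableSet]
  have : (fun (h : Fin t → Fin c → β) (q : Fin t × Fin c) => h q.1 q.2) ⁻¹' D
      = Set.pi Set.univ (fun _ : Fin t => D₀) := by
    ext h; simp [hDdef, Set.mem_pi]
  rw [this, Measure.pi_pi]
  simp

lemma card_pair_subtype {α : Type*} [Fintype α] [DecidableEq α] (k : ℕ) :
    Fintype.card {y : α × Finset α // y.2.card = k ∧ y.1 ∉ y.2}
      = (Fintype.card α).choose k * (Fintype.card α - k) := by
  classical
  have e : {y : α × Finset α // y.2.card = k ∧ y.1 ∉ y.2}
      ≃ Σ S : {S : Finset α // S.card = k}, {c : α // c ∉ S.1} :=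
    { toFun := fun y => ⟨⟨y.1.2, y.2.1⟩, ⟨y.1.1, y.2.2⟩⟩
      invFun := fun z => ⟨(z.2.1, z.1.1), z.1.2, z.2.2⟩
      left_inv := fun y => rfl
      right_inv := fun z => rfl }
  rw [Fintype.card_congr e, Fintype.card_sigma]
  have hfix : ∀ S : {S : Finset α // S.card = k},
      Fintype.card {c : α // c ∉ S.1} = Fintype.card α - k := by
    intro S
    rw [Fintype.card_subtype_compl]
    congr 1
    rw [Fintype.card_coe, S.2]
  simp [hfix, Finset.sum_const, Fintype.card_finset_len, mul_comm]

end Aux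

/-- A random `m × n` binary matrix with i.i.d. Bernoulli(`p`) entries, `p ∈ (0,1)`,
`n ≥ k+1`, `m ≥ Δ`, fails to be `(k, Δ)`-deletion disjunct with probability at most
`(1 - p(1-p)^k)^(m-Δ) · C(m,Δ)² · C(n,k) · (n-k)`. -/
theorem random_matrix_deletion_disjunct_failure_bound
    (m n k Δ : ℕ) (hn : k + 1 ≤ n) (hm : Δ ≤ m)
    (p : ℝ≥0∞) (hp0 : 0 < p) (hp1 : p < 1) :
    Measure.pi (fun _ : Fin m × Fin n => (PMF.bernoulli p.toNNReal (by simpa using (ENNReal.toNNReal_le_toNNReal hp1.ne_top ENNReal.one_ne_top).2 hp1.le)).toMeasure)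
      {f : Fin m × Fin n → Bool | ¬ DelDisjunct k Δ (fun r c => f (r, c))} ≤
    (1 - p * (1 - p) ^ k) ^ (m - Δ) * (m.choose Δ : ℝ≥0∞) ^ 2 *
      (n.choose k : ℝ≥0∞) * ((n - k : ℕ) : ℝ≥0∞) := by
  classical
  set t := m - Δ with ht
  set ν : Measure Bool := (PMF.bernoulli p.toNNReal (by simpa using (ENNReal.toNNReal_le_toNNReal hp1.ne_top ENNReal.one_ne_top).2 hp1.le)).toMeasure with hν
  haveI : IsProbabilityMeasure ν := PMF.toMeasure.isProbabilityMeasure _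
  set μ : Measure (Fin m × Fin n → Bool) := Measure.pi (fun _ : Fin m × Fin n => ν) with hμ
  -- the forbidden pattern
  set h₀ : Fin (k + 1) → Bool := fun j => decide (j = 0) with hh₀
  set D₀ : Set (Fin (k + 1) → Bool) := {h₀}ᶜ with hD₀def
  have hsingleSet : ({h₀} : Set (Fin (k + 1) → Bool))
      = Set.pi Set.univ fun j => ({h₀ j} : Set Bool) := by
    ext g
    simp [Set.mem_pi, funext_iff]
  have hh₀meas : MeasurableSet ({h₀} : Set (Fin (k + 1) → Bool)) := by
    rw [hsingleSet]
    exact MeasurableSet.univ_pi fun j => measurableSet_singleton _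
  have hD₀ : MeasurableSet D₀ := hh₀meas.compl
  have hνtrue : ν {true} = p := by
    rw [hν, PMF.toMeasure_apply_singleton _ _ (measurableSet_singleton _)]
    refine (PMF.bernoulli_apply _ true).trans ?_
    simp [ENNReal.coe_toNNReal hp1.ne_top]
  have hνfalse : ν {false} = 1 - p := by
    rw [hν, PMF.toMeasure_apply_singleton _ _ (measurableSet_singleton _)]
    refine (PMF.bernoulli_apply _ false).trans ?_
    simp [ENNReal.coe_sub, ENNReal.coe_toNNReal hp1.ne_top]
  have hsingle : Measure.pi (fun _ : Fin (k + 1) => ν) {h₀} = p * (1 - p) ^ k := by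
    rw [hsingleSet, Measure.pi_pi, Fin.prod_univ_succ]
    have h0 : h₀ 0 = true := by simp [hh₀]
    have hsucc : ∀ s : Fin k, h₀ s.succ = false := fun s => by
      simp [hh₀, Fin.succ_ne_zero]
    rw [h0, hνtrue]
    congr 1
    rw [Finset.prod_congr rfl fun s _ => by rw [hsucc s, hνfalse]]
    simp [Finset.prod_const]
  have hD₀measure : Measure.pi (fun _ : Fin (k + 1) => ν) D₀ = 1 - p * (1 - p) ^ k := by
    rw [hD₀def, measure_compl hh₀meas (measure_ne_top _ _), measure_univ, hsingle]
  -- the index type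
  set Ω := {x : (Fin n × Finset (Fin n)) × (Finset (Fin m) × Finset (Fin m)) //
      (x.1.2.card = k ∧ x.1.1 ∉ x.1.2) ∧ (x.2.1.card = t ∧ x.2.2.card = t)} with hΩ
  let φ : Ω → (Fin t × Fin (k + 1)) → (Fin m × Fin n) := fun x q =>
    if h : q.2 = 0 then (x.1.2.1.orderEmbOfFin x.2.2.1 q.1, x.1.1.1)
    else (x.1.2.2.orderEmbOfFin x.2.2.2 q.1, x.1.1.2.orderEmbOfFin x.2.1.1 (q.2.pred h))
  have hφinj : ∀ x : Ω, Function.Injective (φ x) := by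
    rintro x ⟨ℓ, j⟩ ⟨ℓ', j'⟩ hEq
    by_cases hj : j = 0 <;> by_cases hj' : j' = 0
    · subst hj; subst hj'
      simp only [φ, dif_pos, Prod.mk.injEq] at hEq
      have hℓ : ℓ = ℓ' := (x.1.2.1.orderEmbOfFin x.2.2.1).injective hEq.1
      simp [hℓ]
    · exfalso
      simp only [φ, dif_pos hj, dif_neg hj', Prod.mk.injEq] at hEq
      exact x.2.1.2 (hEq.2 ▸ Finset.orderEmbOfFin_mem _ x.2.1.1 _)
    · exfalso
      simp only [φ, dif_pos hj', dif_neg hj, Prod.mk.injEq] at hEq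
      exact x.2.1.2 (hEq.2 ▸ Finset.orderEmbOfFin_mem _ x.2.1.1 _)
    · simp only [φ, dif_neg hj, dif_neg hj', Prod.mk.injEq] at hEq
      have hℓ : ℓ = ℓ' := (x.1.2.2.orderEmbOfFin x.2.2.2).injective hEq.1
      have hpred : j.pred hj = j'.pred hj' :=
        (x.1.1.2.orderEmbOfFin x.2.1.1).injective hEq.2
      have hjj : j = j' := by
        rw [← Fin.succ_pred j hj, ← Fin.succ_pred j' hj', hpred]
      simp [hℓ, hjj]
  let E : Ω → Set (Fin m × Fin n → Bool) := fun x =>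
    {f | ∀ ℓ : Fin t, (fun j => f (φ x (ℓ, j))) ∈ D₀}
  have hE : ∀ x : Ω, μ (E x) = (1 - p * (1 - p) ^ k) ^ t := by
    intro x
    rw [hμ, measure_blockEvent ν (hφinj x) hD₀, hD₀measure]
  -- covering
  have hcover : {f : Fin m × Fin n → Bool | ¬ DelDisjunct k Δ (fun r c => f (r, c))}
      ⊆ ⋃ x : Ω, E x := by
    intro f hf
    simp only [Set.mem_setOf_eq, DelDisjunct, not_forall] at hf
    obtain ⟨i, hi, u, v, hu, hv, hcontra⟩ := hf
    push_neg at hcontra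
    obtain ⟨a, ha, hua⟩ := hu
    obtain ⟨b, hb, hvb⟩ := hv
    have hSinj : Function.Injective (fun s : Fin k => i s.succ) := fun s s' h =>
      Fin.succ_injective _ (hi h)
    set c : Fin n := i 0 with hc
    set S : Finset (Fin n) := Finset.image (fun s : Fin k => i s.succ) Finset.univ with hS
    set T₁ : Finset (Fin m) := Finset.image a Finset.univ with hT₁def
    set T₂ : Finset (Fin m) := Finset.image b Finset.univ with hT₂def
    have hScard : S.card = k := by
      rw [hS, Finset.card_image_of_injective _ hSinj, Finset.card_univ, Fintype.card_fin]
    have hcS : c ∉ S := by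
      rw [hS]
      simp only [Finset.mem_image, Finset.mem_univ, true_and, not_exists]
      intro s hs
      exact Fin.succ_ne_zero s (hi hs)
    have hT₁ : T₁.card = t := by
      rw [hT₁def, Finset.card_image_of_injective _ ha.injective, Finset.card_univ,
        Fintype.card_fin]
    have hT₂ : T₂.card = t := by
      rw [hT₂def, Finset.card_image_of_injective _ hb.injective, Finset.card_univ,
        Fintype.card_fin]
    set x : Ω := ⟨((c, S), (T₁, T₂)), ⟨hScard, hcS⟩, hT₁, hT₂⟩ with hx
    refine Set.mem_iUnion.2 ⟨x, ?_⟩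
    intro ℓ
    simp only [D₀, Set.mem_compl_iff, Set.mem_singleton_iff]
    intro hEq
    -- identify the embeddings
    have hembT₁ : ∀ r, T₁.orderEmbOfFin hT₁ r = a r := by
      intro r
      rw [← Finset.orderEmbOfFin_unique hT₁
        (fun r => Finset.mem_image_of_mem a (Finset.mem_univ r)) ha]
    have hembT₂ : ∀ r, T₂.orderEmbOfFin hT₂ r = b r := by
      intro r
      rw [← Finset.orderEmbOfFin_unique hT₂
        (fun r => Finset.mem_image_of_mem b (Finset.mem_univ r)) hb]
    -- value at 0
    have h0 : f (a ℓ, c) = true := by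
      have h00 := congrFun hEq 0
      simp only [φ, dif_pos rfl] at h00
      rw [hembT₁ ℓ] at h00
      rw [h00]
      simp [hh₀]
    -- values at nonzero positions
    have hSvals : ∀ j ∈ S, f (b ℓ, j) = false := by
      intro j hj
      have : ∃ s : Fin k, S.orderEmbOfFin hScard s = j := by
        have := Finset.range_orderEmbOfFin S hScard
        rw [← Finset.mem_coe, ← this] at hj
        exact hj
      obtain ⟨s, hs⟩ := this
      have hs1 := congrFun hEq s.succ
      simp only [φ, dif_neg (Fin.succ_ne_zero s)] at hs1
      rw [hembT₂ ℓ] at hs1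
      have hpred : (s.succ).pred (Fin.succ_ne_zero s) = s := by simp
      rw [hpred, hs] at hs1
      rw [hs1]
      simp [hh₀, Fin.succ_ne_zero]
    -- contradiction
    have huℓ : u ℓ = true := by
      rw [hua ℓ]
      exact h0
    have hvℓ : v ℓ = false := by
      rw [hvb ℓ]
      have : ∀ s : Fin k, f (b ℓ, i s.succ) = false := fun s =>
        hSvals _ (Finset.mem_image_of_mem _ (Finset.mem_univ s))
      have hbot : (Finset.univ.sup fun s : Fin k => f (b ℓ, i s.succ)) = ⊥ :=
        (Finset.sup_eq_bot_iff _ _).2 fun s _ => this s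
      exact hbot
    exact hcontra ℓ huℓ hvℓ
  -- counting
  have hcard : Fintype.card Ω = (n.choose k * (n - k)) * (m.choose Δ) ^ 2 := by
    have e1 : Ω ≃ ({y : Fin n × Finset (Fin n) // y.2.card = k ∧ y.1 ∉ y.2} ×
        {z : Finset (Fin m) × Finset (Fin m) // z.1.card = t ∧ z.2.card = t}) :=
      Equiv.subtypeProdEquivProd
        (p := fun y : Fin n × Finset (Fin n) => y.2.card = k ∧ y.1 ∉ y.2)
        (q := fun z : Finset (Fin m) × Finset (Fin m) => z.1.card = t ∧ z.2.card = t)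
    have e2 : {z : Finset (Fin m) × Finset (Fin m) // z.1.card = t ∧ z.2.card = t} ≃
        ({T : Finset (Fin m) // T.card = t} × {T : Finset (Fin m) // T.card = t}) :=
      Equiv.subtypeProdEquivProd
        (p := fun T : Finset (Fin m) => T.card = t)
        (q := fun T : Finset (Fin m) => T.card = t)
    calc Fintype.card Ω
        = Fintype.card ({y : Fin n × Finset (Fin n) // y.2.card = k ∧ y.1 ∉ y.2} ×
            ({T : Finset (Fin m) // T.card = t} × {T : Finset (Fin m) // T.card = t})) :=
          Fintype.card_congr (e1.trans (Equiv.prodCongr (Equiv.refl _) e2))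
      _ = (n.choose k * (n - k)) * (m.choose Δ) ^ 2 := by
          rw [Fintype.card_prod, Fintype.card_prod, card_pair_subtype,
            Fintype.card_finset_len, Fintype.card_fin, Fintype.card_fin]
          rw [ht, Nat.choose_symm hm]
          ring
  -- union bound
  calc μ {f : Fin m × Fin n → Bool | ¬ DelDisjunct k Δ (fun r c => f (r, c))}
      ≤ μ (⋃ x : Ω, E x) := measure_mono hcover
    _ ≤ ∑' x : Ω, μ (E x) := measure_iUnion_le _
    _ = ∑ x : Ω, μ (E x) := tsum_fintype _
    _ = (Fintype.card Ω : ℝ≥0∞) * (1 - p * (1 - p) ^ k) ^ t := by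
        rw [Finset.sum_congr rfl fun x _ => hE x, Finset.sum_const, nsmul_eq_mul,
          Finset.card_univ]
    _ = (1 - p * (1 - p) ^ k) ^ (m - Δ) * (m.choose Δ : ℝ≥0∞) ^ 2 *
          (n.choose k : ℝ≥0∞) * ((n - k : ℕ) : ℝ≥0∞) := by
        rw [hcard, ← ht]
        push_cast
        ring
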